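/- Let W = {w ∈ W_G : w(Φ_G⁺) ⊇ Φ_K⁺}. Then min over w ∈ W of ‖w·δ_G − δ_K‖² equals min over w ∈ W_G of ‖w·δ_G − δ_K‖²; equivalently, max over w ∈ W of ⟨w·δ_G, δ_K⟩ equals max over w ∈ W_G of ⟨w·δ_G, δ_K⟩. -/

import Mathlib

open scoped RealInnerProductSpace

/-- The reflection in the hyperplane orthogonal to `α`. -/
noncomputable def rootReflection {V : Type*} [NormedAddCommGroup V] [InnerProductSpace ℝ V]
    [FiniteDimensional ℝ V] (α : V) : V ≃ₗᵢ[ℝ] V :=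
  Submodule.reflection ((ℝ ∙ α)ᗮ)

/-- The Weyl group: the group generated by the reflections in the roots. -/
noncomputable def weylGroup {V : Type*} [NormedAddCommGroup V] [InnerProductSpace ℝ V]
    [FiniteDimensional ℝ V] (Φ : Finset V) : Subgroup (V ≃ₗᵢ[ℝ] V) :=
  Subgroup.closure { w | ∃ α ∈ Φ, w = rootReflection α }

section Aux

variable {V : Type*} [NormedAddCommGroup V] [InnerProductSpace ℝ V] [FiniteDimensional ℝ V]

lemma rootReflection_apply (α x : V) (hα : α ≠ 0) :
    rootReflection α x = x - (2 * ⟪α, x⟫ / ‖α‖ ^ 2) • α := by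
  have hq : ((⟪α, x⟫ / ‖α‖ ^ 2) • α) ∈ ((ℝ ∙ α)ᗮ)ᗮ :=
    Submodule.le_orthogonal_orthogonal _ (Submodule.smul_mem _ _ (Submodule.mem_span_singleton_self α))
  have hp : x - (⟪α, x⟫ / ‖α‖ ^ 2) • α ∈ (ℝ ∙ α)ᗮ := by
    rw [Submodule.mem_orthogonal_singleton_iff_inner_left]
    rw [inner_sub_left, real_inner_smul_left, real_inner_comm x α]
    rw [real_inner_self_eq_norm_sq α]
    have h : ‖α‖ ^ 2 ≠ 0 := pow_ne_zero _ (norm_ne_zero_iff.mpr hα)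
    field_simp
    ring
  have hx : x = (x - (⟪α, x⟫ / ‖α‖ ^ 2) • α) + (⟪α, x⟫ / ‖α‖ ^ 2) • α := by abel
  calc rootReflection α x
      = Submodule.reflection ((ℝ ∙ α)ᗮ) ((x - (⟪α, x⟫ / ‖α‖ ^ 2) • α) + (⟪α, x⟫ / ‖α‖ ^ 2) • α) := by
        rw [rootReflection, ← hx]
    _ = (x - (⟪α, x⟫ / ‖α‖ ^ 2) • α) + -((⟪α, x⟫ / ‖α‖ ^ 2) • α) := by
        rw [map_add, Submodule.reflection_mem_subspace_eq_self hp,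
          Submodule.reflection_mem_subspace_orthogonalComplement_eq_neg hq]
    _ = x - (2 * ⟪α, x⟫ / ‖α‖ ^ 2) • α := by
        match_scalars <;> ring

lemma rootReflection_self (α : V) (hα : α ≠ 0) : rootReflection α α = -α := by
  rw [rootReflection_apply α α hα, real_inner_self_eq_norm_sq]
  have h : ‖α‖ ^ 2 ≠ 0 := pow_ne_zero _ (norm_ne_zero_iff.mpr hα)
  rw [mul_div_assoc, div_self h]
  module

lemma rootReflection_inner (α x y : V) :
    ⟪rootReflection α x, y⟫ = ⟪x, rootReflection α y⟫ := by
  conv_lhs => rw [← Submodule.reflection_reflection ((ℝ ∙ α)ᗮ) y]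
  exact (rootReflection α).inner_map_map x _

lemma key_pos (f : V →ₗ[ℝ] ℝ) (Ψ : Finset V) (h0 : (0:V) ∉ Ψ)
    (hf : ∀ β ∈ Ψ, f β ≠ 0)
    (hrefl : ∀ α ∈ Ψ, ∀ β ∈ Ψ, rootReflection α β ∈ Ψ)
    (Ψp : Finset V) (hΨp : ∀ β, β ∈ Ψp ↔ β ∈ Ψ ∧ 0 < f β)
    (α : V) (hα : α ∈ Ψ) (hfα : 0 < f α) :
    0 < ⟪(2⁻¹:ℝ) • ∑ β ∈ Ψp, β, α⟫ := by
  classical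
  have hα0 : α ≠ 0 := fun h => h0 (h ▸ hα)
  set s := rootReflection α with hs
  set δ : V := (2⁻¹:ℝ) • ∑ β ∈ Ψp, β with hδ
  set C : Finset V := Ψp.image s with hC
  have hΨpΨ : ∀ β ∈ Ψp, β ∈ Ψ := fun β hβ => ((hΨp β).1 hβ).1
  have hCΨ : ∀ γ ∈ C, γ ∈ Ψ := by
    intro γ hγ
    rcases Finset.mem_image.1 hγ with ⟨β, hβ, rfl⟩
    exact hrefl α hα β (hΨpΨ β hβ)
  -- the sum difference is positive
  have hsplit1 := Finset.sum_filter_add_sum_filter_not Ψp (· ∈ C) (fun β => f β)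
  have hsplit2 := Finset.sum_filter_add_sum_filter_not C (· ∈ Ψp) (fun β => f β)
  have hinter : Ψp.filter (· ∈ C) = C.filter (· ∈ Ψp) := by
    ext x; simp [Finset.mem_filter, and_comm]
  have hneg : -α ∈ C.filter (· ∉ Ψp) := by
    refine Finset.mem_filter.2 ⟨?_, ?_⟩
    · refine Finset.mem_image.2 ⟨α, (hΨp α).2 ⟨hα, hfα⟩, ?_⟩
      exact rootReflection_self α hα0
    · intro hmem
      have := ((hΨp _).1 hmem).2
      simp only [map_neg] at this
      linarith
  have hsumneg : ∑ β ∈ C.filter (· ∉ Ψp), f β < 0 := by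
    refine Finset.sum_neg (fun γ hγ => ?_) ⟨-α, hneg⟩
    rcases Finset.mem_filter.1 hγ with ⟨hγC, hγn⟩
    have h1 := hf γ (hCΨ γ hγC)
    have h2 : ¬ (0 < f γ) := fun h => hγn ((hΨp γ).2 ⟨hCΨ γ hγC, h⟩)
    cases lt_or_gt_of_ne h1 with
    | inl h => exact h
    | inr h => exact absurd h h2
  have hsumpos : 0 ≤ ∑ β ∈ Ψp.filter (· ∉ C), f β :=
    Finset.sum_nonneg fun β hβ => le_of_lt ((hΨp β).1 (Finset.mem_filter.1 hβ).1).2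
  have hdiff : 0 < ∑ β ∈ Ψp, f β - ∑ γ ∈ C, f γ := by
    rw [← hsplit1, ← hsplit2, hinter]
    linarith
  -- f(δ) - f(s δ) = (2⟪α,δ⟫/‖α‖²) f α,  and also = 2⁻¹ (∑_{Ψp} f - ∑_C f) > 0
  have hsδ : s δ = δ - (2 * ⟪α, δ⟫ / ‖α‖ ^ 2) • α := rootReflection_apply α δ hα0
  have hfsδ : f (s δ) = (2⁻¹:ℝ) * ∑ γ ∈ C, f γ := by
    have : s δ = (2⁻¹:ℝ) • ∑ β ∈ Ψp, s β := by
      rw [hδ, map_smul, map_sum]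
    rw [this, map_smul, map_sum, hC, Finset.sum_image
      (fun x _ y _ h => (rootReflection α).injective h)]
    simp
    rfl
  have hfδ : f δ = (2⁻¹:ℝ) * ∑ β ∈ Ψp, f β := by
    rw [hδ, map_smul, map_sum]; simp
  have heq : f δ - f (s δ) = (2 * ⟪α, δ⟫ / ‖α‖ ^ 2) * f α := by
    simp only [hsδ, map_sub, map_smul, smul_eq_mul]; ring
  have hpos : 0 < (2 * ⟪α, δ⟫ / ‖α‖ ^ 2) * f α := by
    rw [← heq, hfδ, hfsδ]
    linarith
  have hn : (0:ℝ) < ‖α‖ ^ 2 := pow_pos (norm_pos_iff.2 hα0) 2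
  have : 0 < ⟪α, δ⟫ := by
    by_contra h
    push_neg at h
    have : (2 * ⟪α, δ⟫ / ‖α‖ ^ 2) * f α ≤ 0 := by
      apply mul_nonpos_of_nonpos_of_nonneg
      · apply div_nonpos_of_nonpos_of_nonneg _ (le_of_lt hn)
        linarith
      · exact le_of_lt hfα
    linarith
  rw [real_inner_comm]
  exact this


lemma weyl_image [DecidableEq V] (Φ : Finset V)
    (hrefl : ∀ α ∈ Φ, ∀ β ∈ Φ, rootReflection α β ∈ Φ)
    {w : V ≃ₗᵢ[ℝ] V} (hw : w ∈ weylGroup Φ) :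
    Φ.image w = Φ := by
  classical
  induction hw using Subgroup.closure_induction with
  | mem x hx =>
    rcases hx with ⟨α, hα, rfl⟩
    refine Finset.eq_of_subset_of_card_le ?_ ?_
    · intro β hβ
      rcases Finset.mem_image.1 hβ with ⟨γ, hγ, rfl⟩
      exact hrefl α hα γ hγ
    · rw [Finset.card_image_of_injective _ (rootReflection α).injective]
  | one => simp
  | mul x y hx hy ihx ihy =>
    have : Φ.image (x * y) = (Φ.image y).image x := by
      rw [Finset.image_image]; rfl
    rw [this, ihy, ihx]
  | inv x hx ihx =>
    have h2 : (Φ.image x).image ⇑(x⁻¹) = Φ := by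
      rw [Finset.image_image]
      have he : (⇑(x⁻¹) ∘ ⇑x) = id := by
        funext v
        show x⁻¹ (x v) = v
        exact x.symm_apply_apply v
      rw [he, Finset.image_id]
    rw [ihx] at h2
    exact h2

end Aux

/-- The minimum of `‖w·δ_G − δ_K‖²` over `W = {w ∈ W_G : w(Φ_G⁺) ⊇ Φ_K⁺}` equals its minimum
over all of `W_G`; equivalently, the maximum of `⟨w·δ_G, δ_K⟩` over `W` equals its maximum
over `W_G`. -/
theorem stmt0 {V : Type*} [NormedAddCommGroup V] [InnerProductSpace ℝ V] [FiniteDimensional ℝ V]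
    (Φ : Finset V) (hΦ0 : (0 : V) ∉ Φ)
    (hspan : Submodule.span ℝ (Φ : Set V) = ⊤)
    (hred : ∀ α ∈ Φ, ∀ t : ℝ, t • α ∈ Φ → t = 1 ∨ t = -1)
    (hrefl : ∀ α ∈ Φ, ∀ β ∈ Φ, rootReflection α β ∈ Φ)
    (ΦGp : Finset V)
    (hΦGp : ∃ f : V →ₗ[ℝ] ℝ, (∀ α ∈ Φ, f α ≠ 0) ∧ ∀ α, α ∈ ΦGp ↔ α ∈ Φ ∧ 0 < f α)
    (δG : V) (hδG : δG = (2⁻¹ : ℝ) • ∑ α ∈ ΦGp, α)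
    (ΦK : Finset V) (hΦKsub : ΦK ⊆ Φ)
    (hΦKneg : ∀ α ∈ ΦK, -α ∈ ΦK)
    (hΦKrefl : ∀ α ∈ ΦK, ∀ β ∈ ΦK, rootReflection α β ∈ ΦK)
    (ΦKp : Finset V) (hΦKp : ∀ α, α ∈ ΦKp ↔ α ∈ ΦK ∧ α ∈ ΦGp)
    (δK : V) (hδK : δK = (2⁻¹ : ℝ) • ∑ α ∈ ΦKp, α) :
    (∃ m : ℝ,
      IsLeast {r : ℝ | ∃ w ∈ weylGroup Φ,
        (↑ΦKp : Set V) ⊆ ⇑w '' (↑ΦGp : Set V) ∧ r = ‖w δG - δK‖ ^ 2} m ∧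
      IsLeast {r : ℝ | ∃ w ∈ weylGroup Φ, r = ‖w δG - δK‖ ^ 2} m) ∧
    (∃ M : ℝ,
      IsGreatest {r : ℝ | ∃ w ∈ weylGroup Φ,
        (↑ΦKp : Set V) ⊆ ⇑w '' (↑ΦGp : Set V) ∧ r = ⟪w δG, δK⟫} M ∧
      IsGreatest {r : ℝ | ∃ w ∈ weylGroup Φ, r = ⟪w δG, δK⟫} M) := by
  classical
  obtain ⟨f, hf, hGp⟩ := hΦGp
  have himg : ∀ w ∈ weylGroup Φ, Φ.image ⇑w = Φ := fun w hw => weyl_image Φ hrefl hw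
  -- finiteness of the orbit of δG
  set P : Set V := {x : V | ∃ w ∈ weylGroup Φ, x = w δG} with hP
  have hPfin : P.Finite := by
    have hsub : P ⊆
        Set.range (fun g : (↥ΦGp → ↥Φ) => (2⁻¹:ℝ) • ∑ a ∈ ΦGp.attach, ((g a : V))) := by
      rintro x ⟨w, hw, rfl⟩
      refine ⟨fun a => ⟨w a, ?_⟩, ?_⟩
      · have : w (a : V) ∈ Φ.image ⇑w :=
          Finset.mem_image_of_mem _ ((hGp _).1 a.2).1
        rwa [himg w hw] at this
      · simp only
        rw [hδG, map_smul, map_sum]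
        rw [← Finset.sum_attach ΦGp (fun α => w α)]
    exact (Set.finite_range _).subset hsub
  have hPne : P.Nonempty := ⟨δG, 1, one_mem _, rfl⟩
  obtain ⟨x0, hx0P, hx0max⟩ := Set.exists_max_image P (fun x => ⟪x, δK⟫) hPfin hPne
  obtain ⟨w0, hw0, rfl⟩ := hx0P
  have hmax : ∀ w ∈ weylGroup Φ, ⟪w δG, δK⟫ ≤ ⟪w0 δG, δK⟫ :=
    fun w hw => hx0max _ ⟨w, hw, rfl⟩
  -- Φ is closed under negation
  have hΦneg : ∀ β ∈ Φ, -β ∈ Φ := by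
    intro β hβ
    have hβ0 : β ≠ 0 := fun h => hΦ0 (h ▸ hβ)
    have := hrefl β hβ β hβ
    rwa [rootReflection_self β hβ0] at this
  have hw0inv := (weylGroup Φ).inv_mem hw0
  -- the positive system for K
  have hfK : ∀ β ∈ ΦK, f β ≠ 0 := fun β hβ => hf β (hΦKsub hβ)
  have hK0 : (0:V) ∉ ΦK := fun h => hΦ0 (hΦKsub h)
  have hKp' : ∀ β, β ∈ ΦKp ↔ β ∈ ΦK ∧ 0 < f β := by
    intro β
    constructor
    · intro h
      exact ⟨((hΦKp β).1 h).1, ((hGp β).1 ((hΦKp β).1 h).2).2⟩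
    · rintro ⟨h1, h2⟩
      exact (hΦKp β).2 ⟨h1, (hGp β).2 ⟨hΦKsub h1, h2⟩⟩
  -- the key containment
  have hsub : (↑ΦKp : Set V) ⊆ ⇑w0 '' (↑ΦGp : Set V) := by
    intro α hα
    have hαKp : α ∈ ΦKp := hα
    have hαK : α ∈ ΦK := ((hΦKp α).1 hαKp).1
    have hαGp : α ∈ ΦGp := ((hΦKp α).1 hαKp).2
    have hαΦ : α ∈ Φ := hΦKsub hαK
    have hα0 : α ≠ 0 := fun h => hΦ0 (h ▸ hαΦ)
    by_contra hnot
    have hinv : w0⁻¹ α ∈ Φ := by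
      have : w0⁻¹ α ∈ Φ.image ⇑(w0⁻¹) := Finset.mem_image_of_mem _ hαΦ
      rwa [himg _ hw0inv] at this
    have hw0w0 : w0 (w0⁻¹ α) = α := w0.apply_symm_apply α
    have hninv : w0⁻¹ α ∉ ΦGp := fun h => hnot ⟨w0⁻¹ α, h, hw0w0⟩
    have hfneg : f (w0⁻¹ α) < 0 := by
      rcases lt_or_gt_of_ne (hf _ hinv) with h | h
      · exact h
      · exact absurd ((hGp _).2 ⟨hinv, h⟩) hninv
    have hKP1 : 0 < ⟪δG, -(w0⁻¹ α)⟫ := by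
      rw [hδG]
      refine key_pos f Φ hΦ0 hf hrefl ΦGp hGp _ (hΦneg _ hinv) ?_
      rw [map_neg]
      linarith
    have hinner1 : ⟪w0 δG, α⟫ < 0 := by
      have he : ⟪w0 δG, α⟫ = ⟪δG, w0⁻¹ α⟫ := by
        conv_lhs => rw [← hw0w0]
        exact w0.inner_map_map δG (w0⁻¹ α)
      rw [he]
      rw [inner_neg_right] at hKP1
      linarith
    have hKP2 : 0 < ⟪δK, α⟫ := by
      rw [hδK]
      exact key_pos f ΦK hK0 hfK hΦKrefl ΦKp hKp' α hαK ((hGp α).1 hαGp).2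
    have hsα : rootReflection α ∈ weylGroup Φ := Subgroup.subset_closure ⟨α, hαΦ, rfl⟩
    have hw1 : rootReflection α * w0 ∈ weylGroup Φ := mul_mem hsα hw0
    have hval : ⟪(rootReflection α * w0) δG, δK⟫
        = ⟪w0 δG, δK⟫ - (2 * ⟪α, δK⟫ / ‖α‖ ^ 2) * ⟪w0 δG, α⟫ := by
      have h1 : (rootReflection α * w0) δG = rootReflection α (w0 δG) := rfl
      rw [h1, rootReflection_inner, rootReflection_apply α δK hα0, inner_sub_right,
        real_inner_smul_right]
    have hle := hmax _ hw1
    rw [hval] at hle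
    have hccc : 0 < 2 * ⟪α, δK⟫ / ‖α‖ ^ 2 := by
      have h1 : (0:ℝ) < ‖α‖ ^ 2 := pow_pos (norm_pos_iff.2 hα0) 2
      have h2 : 0 < ⟪α, δK⟫ := by rw [real_inner_comm]; exact hKP2
      positivity
    nlinarith [mul_pos hccc (neg_pos.2 hinner1)]
  -- assembly
  have hnorm : ∀ w : V ≃ₗᵢ[ℝ] V, ‖w δG - δK‖ ^ 2
      = ‖δG‖ ^ 2 + ‖δK‖ ^ 2 - 2 * ⟪w δG, δK⟫ := by
    intro w
    rw [norm_sub_sq_real, w.norm_map]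
    ring
  set M : ℝ := ⟪w0 δG, δK⟫ with hM
  constructor
  · refine ⟨‖δG‖ ^ 2 + ‖δK‖ ^ 2 - 2 * M, ⟨⟨w0, hw0, hsub, by rw [hnorm w0]⟩, ?_⟩,
      ⟨⟨w0, hw0, by rw [hnorm w0]⟩, ?_⟩⟩
    · rintro r ⟨w, hw, -, rfl⟩
      rw [hnorm w]
      have := hmax w hw
      linarith
    · rintro r ⟨w, hw, rfl⟩
      rw [hnorm w]
      have := hmax w hw
      linarith
  · refine ⟨M, ⟨⟨w0, hw0, hsub, rfl⟩, ?_⟩, ⟨⟨w0, hw0, rfl⟩, ?_⟩⟩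
    · rintro r ⟨w, hw, -, rfl⟩
      exact hmax w hw
    · rintro r ⟨w, hw, rfl⟩
      exact hmax w hw
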